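/- For (q₁, q₂) ∈ ℝ² with q₁² + q₂² < 1, set Γ₃ = √(1 − q₁² − q₂²), f = 1/(1 + Γ₃), x = (q₂, −q₁, 0) ∈ ℝ³, let x̂ be the 3×3 antisymmetric matrix with x̂v = x × v for all v, and define the 3×3 real matrix A = I + x̂ + f·x̂². For real numbers p₁, p₂, ν, set p̃₁ = p₂ − f q₁ ν, p̃₂ = −p₁ − f q₂ ν, p̃ = (p̃₁, p̃₂, 0), Π = −e₃ × (Aᵗ(e₃ × p̃)) − ν·e₃, and Γ = Aᵗe₃. Then Π·Γ = q₁p₂ − q₂p₁ − ν. -/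

import Mathlib

set_option maxHeartbeats 2000000
open Matrix

theorem stmt_12 (q₁ q₂ : ℝ) (hq : q₁^2 + q₂^2 < 1)
    (X : Matrix (Fin 3) (Fin 3) ℝ)
    (hX : ∀ v : Fin 3 → ℝ, X.mulVec v = crossProduct ![q₂, -q₁, 0] v)
    (p₁ p₂ ν : ℝ) :
    letI Γ₃ : ℝ := Real.sqrt (1 - q₁^2 - q₂^2)
    letI f : ℝ := 1 / (1 + Γ₃)
    letI A : Matrix (Fin 3) (Fin 3) ℝ := 1 + X + f • (X * X)
    letI pt₁ : ℝ := p₂ - f * q₁ * ν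
    letI pt₂ : ℝ := -p₁ - f * q₂ * ν
    letI Piv : Fin 3 → ℝ :=
      -(crossProduct ![0, 0, 1] (Aᵀ.mulVec (crossProduct ![0, 0, 1] ![pt₁, pt₂, 0])))
        - ν • ![0, 0, 1]
    letI Γ : Fin 3 → ℝ := Aᵀ.mulVec ![0, 0, 1]
    Piv 0 * Γ 0 + Piv 1 * Γ 1 + Piv 2 * Γ 2 = q₁ * p₂ - q₂ * p₁ - ν := by
  have hXeq : X = !![0,0,-q₁; 0,0,-q₂; q₁,q₂,0] := by
    ext i j
    have := congrFun (hX (Pi.single j 1)) i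
    rw [mulVec_single] at this
    fin_cases i <;> fin_cases j <;> simp_all [crossProduct]
  subst hXeq
  have h0 : (0:ℝ) ≤ 1 - q₁^2 - q₂^2 := by nlinarith
  have hs : Real.sqrt (1 - q₁^2 - q₂^2) ^ 2 = 1 - q₁^2 - q₂^2 := Real.sq_sqrt h0
  have hpos : 0 < 1 + Real.sqrt (1 - q₁^2 - q₂^2) := by positivity
  set s := Real.sqrt (1 - q₁^2 - q₂^2) with hsdef
  simp only [cross_apply, mulVec, dotProduct, transpose, Matrix.one_apply,
    Fin.sum_univ_three, Matrix.add_apply, Matrix.smul_apply, Matrix.mul_apply,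
    Matrix.of_apply, Matrix.cons_val', Matrix.cons_val_zero, Matrix.cons_val_one,
    Matrix.head_cons, Matrix.head_fin_const, Matrix.cons_val_fin_one, Matrix.empty_val',
    Pi.sub_apply, Pi.neg_apply, Pi.smul_apply, smul_eq_mul, Matrix.vecHead, Matrix.vecTail,
    Function.comp]
  norm_num [Matrix.vecHead, Matrix.vecTail, Fin.ext_iff, Matrix.cons_val_two]
  have hne : 1 + s ≠ 0 := ne_of_gt hpos
  field_simp
  ring_nf
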